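/- Let p be an odd prime and 0 ≤ m ≤ p−1. Define polynomials A(q) = ∑_{d=0}^{p−m} C(p−m−1, p−m−d)·C(p−m, d)·q^d and B(q) = ∑_{d=0}^{p−m} C(p−m, p−m−d)·C(p−m−1, d)·q^d in 𝔽_p[q], where C(n,r) are binomial coefficients reduced mod p (and C(n,r) = 0 for r < 0 or r > n). Set Ĩ(q) = (1−q)^{2m}·(A(q), B(q)) ∈ 𝔽_p[q]². Then Ĩ satisfies the mod-p quantum differential equation of T*ℙ¹ in the stable basis, specialized at h/t = m: namely, (1−q)·q·(dĨ/dq) = −m·( (1−q)·N + q·J )·Ĩ as an identity in 𝔽_p[q]², where N is the 2×2 matrix with (2,1)-entry 1 and all other entries 0, and J is the 2×2 all-ones matrix. -/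
import Mathlib


open Polynomial Finset

/-- The first component `A(q) = ∑_{d=0}^{p-m} C(p-m-1, p-m-d)·C(p-m, d)·q^d`. -/
noncomputable def varA (p m : ℕ) : Polynomial (ZMod p) :=
  ∑ d ∈ Finset.range (p - m + 1),
    Polynomial.C (((p - m - 1).choose (p - m - d) * (p - m).choose d : ℕ) : ZMod p) *
      Polynomial.X ^ d

/-- The second component `B(q) = ∑_{d=0}^{p-m} C(p-m, p-m-d)·C(p-m-1, d)·q^d`. -/
noncomputable def varB (p m : ℕ) : Polynomial (ZMod p) :=
  ∑ d ∈ Finset.range (p - m + 1),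
    Polynomial.C (((p - m).choose (p - m - d) * (p - m - 1).choose d : ℕ) : ZMod p) *
      Polynomial.X ^ d

/-- The arithmetic flat section `Ĩ(q) = (1-q)^{2m}·(A(q), B(q))`. -/
noncomputable def varI (p m : ℕ) : Fin 2 → Polynomial (ZMod p) :=
  ![(1 - Polynomial.X) ^ (2 * m) * varA p m, (1 - Polynomial.X) ^ (2 * m) * varB p m]

/-- The matrix `N` with lower-left entry `1` and zeros elsewhere. -/
noncomputable def matN (p : ℕ) : Matrix (Fin 2) (Fin 2) (Polynomial (ZMod p)) :=
  !![0, 0; 1, 0]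

/-- The all-ones matrix `J`. -/
noncomputable def matJ (p : ℕ) : Matrix (Fin 2) (Fin 2) (Polynomial (ZMod p)) :=
  !![1, 1; 1, 1]

lemma coeff_varA (p m d : ℕ) :
    (varA p m).coeff d = (((p - m - 1).choose (p - m - d) * (p - m).choose d : ℕ) : ZMod p) := by
  unfold varA
  rw [Polynomial.finset_sum_coeff]
  simp only [Polynomial.coeff_C_mul, Polynomial.coeff_X_pow, mul_ite, mul_one, mul_zero]
  rw [Finset.sum_ite_eq (Finset.range (p - m + 1)) d]
  by_cases h : d < p - m + 1
  · simp [Finset.mem_range, h]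
  · simp only [Finset.mem_range, h, if_false]
    have : (p - m).choose d = 0 := Nat.choose_eq_zero_of_lt (by omega)
    simp [this]

lemma coeff_varB (p m d : ℕ) :
    (varB p m).coeff d = (((p - m).choose (p - m - d) * (p - m - 1).choose d : ℕ) : ZMod p) := by
  unfold varB
  rw [Polynomial.finset_sum_coeff]
  simp only [Polynomial.coeff_C_mul, Polynomial.coeff_X_pow, mul_ite, mul_one, mul_zero]
  rw [Finset.sum_ite_eq (Finset.range (p - m + 1)) d]
  by_cases h : d < p - m + 1
  · simp [Finset.mem_range, h]
  · simp only [Finset.mem_range, h, if_false]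
    have : (p - m - 1).choose d = 0 := Nat.choose_eq_zero_of_lt (by omega)
    simp [this]

lemma identA (s e : ℕ) :
    (e + 1) * (s.choose (s + 1 - (e + 1)) * (s + 1).choose (e + 1))
      + (s + 1) * (s.choose (s + 1 - e) * (s + 1).choose e)
    = e * (s.choose (s + 1 - e) * (s + 1).choose e)
      + (s + 1) * ((s + 1).choose (s + 1 - e) * s.choose e) := by
  rcases Nat.lt_or_ge e 1 with he | he
  · interval_cases e
    have : s.choose (s + 1) = 0 := Nat.choose_eq_zero_of_lt (by omega)
    simp [this, Nat.choose_one_right]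
  rcases le_or_gt e s with hes | hes
  · obtain ⟨f, rfl⟩ : ∃ f, e = f + 1 := ⟨e - 1, by omega⟩
    have h0 : s + 1 - (f + 1 + 1) = s - (f + 1) := by omega
    have h1 : s.choose (s - (f + 1)) = s.choose (f + 1) := Nat.choose_symm hes
    have h2 : s + 1 - (f + 1) = s - f := by omega
    have h3 : s.choose (s - f) = s.choose f := Nat.choose_symm (by omega)
    have h4 : (s + 1).choose (s - f) = (s + 1).choose (f + 1) := by
      have : s - f = (s + 1) - (f + 1) := by omega
      rw [this]; exact Nat.choose_symm (by omega)
    rw [h0, h1, h2, h3, h4]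
    have hA : (s+1).choose (f + 1 + 1) * (f + 1 + 1) = (s+1).choose (f+1) * (s + 1 - (f+1)) :=
      Nat.choose_succ_right_eq (s+1) (f+1)
    have hB : s.choose (f + 1) * (f + 1) = s.choose f * (s - f) :=
      Nat.choose_succ_right_eq s f
    zify [show f ≤ s by omega, show f + 1 ≤ s + 1 by omega] at hA hB ⊢
    linear_combination (s.choose (f+1) : ℤ) * hA - ((s+1).choose (f+1) : ℤ) * hB
  rcases eq_or_lt_of_le (show s + 1 ≤ e by omega) with hse | hse
  · subst hse
    have c1 : (s+1).choose (s + 1 + 1) = 0 := Nat.choose_eq_zero_of_lt (by omega)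
    have c2 : s.choose (s + 1) = 0 := Nat.choose_eq_zero_of_lt (by omega)
    simp [c1, c2, Nat.sub_self, show s + 1 - (s + 1 + 1) = 0 by omega]
  · have c1 : (s+1).choose (e + 1) = 0 := Nat.choose_eq_zero_of_lt (by omega)
    have c2 : (s+1).choose e = 0 := Nat.choose_eq_zero_of_lt (by omega)
    have c3 : s.choose e = 0 := Nat.choose_eq_zero_of_lt (by omega)
    simp [c1, c2, c3]

lemma identB (s e : ℕ) :
    (e + 1) * ((s + 1).choose (s + 1 - (e + 1)) * s.choose (e + 1))
      + (s + 1) * ((s + 1).choose (s + 1 - e) * s.choose e)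
    = e * ((s + 1).choose (s + 1 - e) * s.choose e)
      + (s + 1) * (s.choose (s + 1 - (e + 1)) * (s + 1).choose (e + 1)) := by
  rcases le_or_gt e s with he | he
  · have h0 : s + 1 - (e + 1) = s - e := by omega
    have h1 : (s + 1).choose (s + 1 - e) = (s + 1).choose e := Nat.choose_symm (by omega)
    have h2 : (s + 1).choose (s - e) = (s + 1).choose (e + 1) := by
      have : s - e = (s + 1) - (e + 1) := by omega
      rw [this]; exact Nat.choose_symm (by omega)
    have h3 : s.choose (s - e) = s.choose e := Nat.choose_symm he
    rw [h0, h1, h2, h3]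
    have hA : (s+1).choose (e + 1) * (e + 1) = (s+1).choose e * (s + 1 - e) :=
      Nat.choose_succ_right_eq (s+1) e
    have hB : s.choose (e + 1) * (e + 1) = s.choose e * (s - e) :=
      Nat.choose_succ_right_eq s e
    zify [he, show e ≤ s + 1 by omega] at hA hB ⊢
    linear_combination (-(s.choose e : ℤ)) * hA + ((s+1).choose (e+1) : ℤ) * hB
  · have c1 : s.choose (e+1) = 0 := Nat.choose_eq_zero_of_lt (by omega)
    have c2 : s.choose e = 0 := Nat.choose_eq_zero_of_lt (by omega)
    have c3 : (s+1).choose (e+1) = 0 := Nat.choose_eq_zero_of_lt (by omega)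
    simp [c1, c2, c3]

lemma keyA (p m : ℕ) (hn : 1 ≤ p - m) :
    (1 - Polynomial.X) * Polynomial.derivative (varA p m)
      = Polynomial.C (-(((p - m : ℕ)) : ZMod p)) * (varA p m - varB p m) := by
  obtain ⟨s, hs⟩ : ∃ s, p - m = s + 1 := ⟨p - m - 1, by omega⟩
  have hX : ∀ d, ((Polynomial.X : (ZMod p)[X]) * Polynomial.derivative (varA p m)).coeff d
      = (varA p m).coeff d * (d : ZMod p) := by
    intro d
    cases d with
    | zero => simp [Polynomial.mul_coeff_zero]
    | succ e =>
        rw [Polynomial.coeff_X_mul, Polynomial.coeff_derivative]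
        push_cast; ring
  ext d
  rw [sub_mul, one_mul, Polynomial.coeff_sub, hX d, Polynomial.coeff_derivative,
    Polynomial.coeff_C_mul, Polynomial.coeff_sub, coeff_varA, coeff_varA, coeff_varB]
  rw [hs]
  simp only [Nat.add_sub_cancel]
  have key := identA s d
  have := congrArg (Nat.cast : ℕ → ZMod p) key
  push_cast at this ⊢
  linear_combination this

lemma keyB (p m : ℕ) (hn : 1 ≤ p - m) :
    (1 - Polynomial.X) * Polynomial.X * Polynomial.derivative (varB p m)
      = Polynomial.C (-(((p - m : ℕ)) : ZMod p)) *
          (Polynomial.X * varB p m - varA p m) := by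
  obtain ⟨s, hs⟩ : ∃ s, p - m = s + 1 := ⟨p - m - 1, by omega⟩
  ext d
  rw [show (1 - Polynomial.X) * Polynomial.X * Polynomial.derivative (varB p m)
      = Polynomial.X * Polynomial.derivative (varB p m)
        - Polynomial.X * (Polynomial.X * Polynomial.derivative (varB p m)) by ring]
  rw [Polynomial.coeff_sub, Polynomial.coeff_C_mul, Polynomial.coeff_sub]
  cases d with
  | zero =>
      simp only [Polynomial.mul_coeff_zero, Polynomial.coeff_X_zero, zero_mul, sub_zero,
        coeff_varA]
      rw [hs]
      simp only [Nat.add_sub_cancel, Nat.sub_zero]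
      have : s.choose (s + 1) = 0 := Nat.choose_eq_zero_of_lt (by omega)
      simp [this]
  | succ e =>
      rw [Polynomial.coeff_X_mul, Polynomial.coeff_X_mul, Polynomial.coeff_X_mul,
        Polynomial.coeff_derivative, coeff_varA, coeff_varB, coeff_varB]
      rw [hs]
      simp only [Nat.add_sub_cancel]
      -- need also coeff of X * derivative at e : cases on e
      cases e with
      | zero =>
          simp only [Polynomial.mul_coeff_zero, Polynomial.coeff_X_zero, zero_mul, sub_zero]
          have key := identB s 0
          have := congrArg (Nat.cast : ℕ → ZMod p) key
          push_cast at this ⊢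
          linear_combination this
      | succ f =>
          rw [Polynomial.coeff_X_mul, Polynomial.coeff_derivative, coeff_varB]
          rw [hs]
          simp only [Nat.add_sub_cancel]
          have key := identB s (f + 1)
          have := congrArg (Nat.cast : ℕ → ZMod p) key
          push_cast at this ⊢
          linear_combination this

theorem arithmetic_flat_section_solves_QDE (p m : ℕ) (hp : p.Prime) (hodd : p ≠ 2)
    (hm : m ≤ p - 1) :
    ∀ i : Fin 2,
      ((1 : Polynomial (ZMod p)) - Polynomial.X) * Polynomial.X * Polynomial.derivative (varI p m i)
        = Polynomial.C (-(m : ZMod p)) *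
            Matrix.mulVec (((1 : Polynomial (ZMod p)) - Polynomial.X) • matN p + (Polynomial.X : Polynomial (ZMod p)) • matJ p)
              (varI p m) i := by
  have hp2 := hp.two_le
  have hn : 1 ≤ p - m := by omega
  have hcast : (-(m : ZMod p)) = ((p - m : ℕ) : ZMod p) := by
    have h0 : (((p - m) + m : ℕ) : ZMod p) = 0 := by
      rw [Nat.sub_add_cancel (by omega)]; exact ZMod.natCast_self p
    push_cast at h0
    linear_combination -h0
  have hpow : (Polynomial.C ((2*m : ℕ) : ZMod p)) * ((1 - Polynomial.X) * (1-Polynomial.X)^(2*m - 1))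
      = Polynomial.C ((2*m : ℕ) : ZMod p) * (1-Polynomial.X)^(2*m) := by
    cases m with
    | zero => simp
    | succ m' =>
        rw [show 2*(m'+1) - 1 = 2*m'+1 by omega, show 2*(m'+1) = (2*m'+1)+1 by omega]
        ring
  have h2m : (Polynomial.C ((2*m : ℕ) : ZMod p) : (ZMod p)[X])
      = -(2 * Polynomial.C (((p - m : ℕ)) : ZMod p)) := by
    have : ((2*m : ℕ) : ZMod p) = -(2 * (((p - m : ℕ)) : ZMod p)) := by
      push_cast
      rw [← hcast]; ring
    rw [this, map_neg, map_mul, map_ofNat]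
  have hA := keyA p m hn
  have hB := keyB p m hn
  rw [map_neg] at hA hB
  intro i
  fin_cases i
  · simp only [varI, matN, matJ, Matrix.mulVec, dotProduct, Fin.sum_univ_two,
      Matrix.add_apply, Matrix.smul_apply, smul_eq_mul, Matrix.cons_val', Matrix.cons_val_zero,
      Matrix.cons_val_one, Matrix.head_cons, Matrix.empty_val', Matrix.cons_val_fin_one,
      Matrix.head_fin_const, Matrix.of_apply, Matrix.cons_val_fin_one, Fin.mk_zero, Fin.mk_one]
    rw [Polynomial.derivative_mul, Polynomial.derivative_pow]
    rw [hcast]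
    simp only [Polynomial.derivative_sub, Polynomial.derivative_one, Polynomial.derivative_X,
      zero_sub]
    linear_combination (Polynomial.X * (1-Polynomial.X)^(2*m)) * hA
      - (Polynomial.X * varA p m) * hpow
      - (Polynomial.X * (1-Polynomial.X)^(2*m) * varA p m) * h2m
  · simp only [varI, matN, matJ, Matrix.mulVec, dotProduct, Fin.sum_univ_two,
      Matrix.add_apply, Matrix.smul_apply, smul_eq_mul, Matrix.cons_val', Matrix.cons_val_zero,
      Matrix.cons_val_one, Matrix.head_cons, Matrix.empty_val', Matrix.cons_val_fin_one,
      Matrix.head_fin_const, Matrix.of_apply, Matrix.cons_val_fin_one, Fin.mk_zero, Fin.mk_one]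
    rw [Polynomial.derivative_mul, Polynomial.derivative_pow]
    rw [hcast]
    simp only [Polynomial.derivative_sub, Polynomial.derivative_one, Polynomial.derivative_X,
      zero_sub]
    linear_combination ((1-Polynomial.X)^(2*m)) * hB
      - (Polynomial.X * varB p m) * hpow
      - (Polynomial.X * (1-Polynomial.X)^(2*m) * varB p m) * h2m
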